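/- Let (X, 0, f) and (Y, 0, g) be pointed modules with smash structure map h on X × Y. Let x ∈ X and y ∈ Y be nonzero elements such that f^[n] x = 0 for some n and g^[m] y = 0 for some m. Then sInf {n : ℕ | h^[n] (x, y) = (0, 0)} = min (sInf {n : ℕ | f^[n] x = 0}) (sInf {n : ℕ | g^[n] y = 0}). (Equivalently, depth (x, y) = min (depth x, depth y).) -/
import Mathlib


/-- **Proposition (depth in the smash product, nilpotent case).**
Let `(X, 0, f)` and `(Y, 0, g)` be pointed modules with smash structure map `h` on
`X × Y`.  If `x ≠ 0`, `y ≠ 0`, and both are annihilated by some iterate of `f`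
(resp. `g`), then the least `n` with `h^[n] (x, y) = (0,0)` is the minimum of the
least `n` with `f^[n] x = 0` and the least `n` with `g^[n] y = 0`; equivalently
`depth (x, y) = min (depth x, depth y)`. -/
theorem smash_depth_min {X Y : Type*} [Zero X] [Zero Y]
    [DecidableEq X] [DecidableEq Y]
    (f : X → X) (g : Y → Y) (hf : f 0 = 0) (hg : g 0 = 0)
    (h : X × Y → X × Y)
    (hh : ∀ p : X × Y,
      h p = if f p.1 ≠ 0 ∧ g p.2 ≠ 0 then (f p.1, g p.2) else (0, 0))
    (x : X) (y : Y) (hx : x ≠ 0) (hy : y ≠ 0)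
    (hxn : ∃ n : ℕ, f^[n] x = 0) (hyn : ∃ m : ℕ, g^[m] y = 0) :
    sInf {n : ℕ | h^[n] (x, y) = (0, 0)} =
      min (sInf {n : ℕ | f^[n] x = 0}) (sInf {n : ℕ | g^[n] y = 0}) := by
  set a := sInf {n : ℕ | f^[n] x = 0} with ha
  set b := sInf {n : ℕ | g^[n] y = 0} with hb
  have haS : f^[a] x = 0 := Nat.sInf_mem hxn
  have hbS : g^[b] y = 0 := Nat.sInf_mem hyn
  have ha_min : ∀ j < a, f^[j] x ≠ 0 := fun j hj => Nat.notMem_of_lt_sInf hj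
  have hb_min : ∀ j < b, g^[j] y ≠ 0 := fun j hj => Nat.notMem_of_lt_sInf hj
  set m := min a b with hm
  have hkey : ∀ k < m, h^[k] (x, y) = (f^[k] x, g^[k] y) := by
    intro k hk
    induction k with
    | zero => simp
    | succ k ih =>
      have hk' : k < m := Nat.lt_of_succ_lt hk
      rw [Function.iterate_succ_apply', ih hk', hh]
      have h1 : f^[k+1] x ≠ 0 := ha_min _ (lt_of_lt_of_le hk (min_le_left _ _))
      have h2 : g^[k+1] y ≠ 0 := hb_min _ (lt_of_lt_of_le hk (min_le_right _ _))
      rw [Function.iterate_succ_apply'] at h1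
      rw [Function.iterate_succ_apply'] at h2
      rw [Function.iterate_succ_apply' f, Function.iterate_succ_apply' g]
      exact if_pos ⟨h1, h2⟩
  have hm1 : 1 ≤ m := by
    rcases Nat.eq_zero_or_pos m with h0 | h1
    · exfalso
      rcases Nat.min_eq_zero_iff.mp h0 with h0 | h0
      · exact hx (by simpa [h0] using haS)
      · exact hy (by simpa [h0] using hbS)
    · exact h1
  have hmzero : ¬ (f^[m] x ≠ 0 ∧ g^[m] y ≠ 0) := by
    rintro ⟨h1, h2⟩
    rcases min_cases a b with ⟨he, _⟩ | ⟨he, _⟩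
    · exact h1 (by rw [hm, he]; exact haS)
    · exact h2 (by rw [hm, he]; exact hbS)
  have hmem : h^[m] (x, y) = (0, 0) := by
    obtain ⟨k, hke⟩ : ∃ k, m = k + 1 := ⟨m - 1, (Nat.succ_pred_eq_of_pos hm1).symm⟩
    rw [hke, Function.iterate_succ_apply', hkey k (hke ▸ Nat.lt_succ_self k), hh]
    refine if_neg ?_
    rw [← Function.iterate_succ_apply' f, ← Function.iterate_succ_apply' g]
    show ¬(f^[k + 1] x ≠ 0 ∧ g^[k + 1] y ≠ 0)
    rw [← hke]; exact hmzero
  refine le_antisymm (Nat.sInf_le hmem) (le_csInf ⟨m, hmem⟩ ?_)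
  intro k hk
  by_contra hlt
  push_neg at hlt
  have := hkey k hlt
  rw [Set.mem_setOf_eq, this, Prod.mk.injEq] at hk
  exact ha_min k (lt_of_lt_of_le hlt (min_le_left _ _)) hk.1
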